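/- Let μ be a probability measure with Gaussian-like tails relative to q₀ (as above), and let q̂₀ be a Gaussian mixture density with uniformly bounded means and eigenvalue-bounded covariances. Then the log-density ratio x ↦ log(q̂₀(x)/q₀(x)) belongs to the Orlicz class L^{φ_1}(Q₀) (where Q₀ has density q₀), with ‖log(q̂₀/q₀)‖_{φ_1} bounded by a constant depending only on d, c_μ, λ̲, λ̄, c̲, c̄, s̲, s̄ — uniformly over all such mixtures. -/

import Mathlib

open MeasureTheory Matrix

/-- The multivariate Gaussian density with mean `μ` and covariance `Ω` on `n → ℝ`. -/
noncomputable def gaussDensity {n : Type*} [Fintype n] [DecidableEq n]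
    (μ : n → ℝ) (Ω : Matrix n n ℝ) (x : n → ℝ) : ℝ :=
  (Real.sqrt ((2 * Real.pi) ^ (Fintype.card n) * Ω.det))⁻¹ *
    Real.exp (-(1 / 2) * ((x - μ) ⬝ᵥ (Ω⁻¹ *ᵥ (x - μ))))

/-- The `φ_1`-Luxemburg norm with threshold 2, via the lower integral. -/
noncomputable def luxE {X : Type*} [MeasurableSpace X] (μ : Measure X) (f : X → ℝ) : ℝ :=
  sInf {c : ℝ | 0 < c ∧ ∫⁻ x, ENNReal.ofReal (Real.exp (|f x| / c)) ∂μ ≤ 2}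

section LinAlg
variable {d : ℕ}

lemma quad_ge {lam : ℝ} {Ω : Matrix (Fin d) (Fin d) ℝ}
    (h : (Ω - lam • (1 : Matrix (Fin d) (Fin d) ℝ)).PosSemidef) (x : Fin d → ℝ) :
    lam * ∑ i, x i ^ 2 ≤ x ⬝ᵥ Ω *ᵥ x := by
  have h2 := h.dotProduct_mulVec_nonneg x
  simp only [star_trivial, sub_mulVec, dotProduct_sub, smul_mulVec, one_mulVec,
    dotProduct_smul, smul_eq_mul] at h2
  have hx : x ⬝ᵥ x = ∑ i, x i ^ 2 := by
    simp [dotProduct, pow_two]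
  linarith [h2, hx ▸ h2]

lemma quad_le {lam : ℝ} {Ω : Matrix (Fin d) (Fin d) ℝ}
    (h : (lam • (1 : Matrix (Fin d) (Fin d) ℝ) - Ω).PosSemidef) (x : Fin d → ℝ) :
    x ⬝ᵥ Ω *ᵥ x ≤ lam * ∑ i, x i ^ 2 := by
  have h2 := h.dotProduct_mulVec_nonneg x
  simp only [star_trivial, sub_mulVec, dotProduct_sub, smul_mulVec, one_mulVec,
    dotProduct_smul, smul_eq_mul] at h2
  have hx : x ⬝ᵥ x = ∑ i, x i ^ 2 := by
    simp [dotProduct, pow_two]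
  linarith [h2, hx ▸ h2]

lemma herm_symm_dot {Ω : Matrix (Fin d) (Fin d) ℝ} (hΩ : Ω.IsHermitian)
    (x y : Fin d → ℝ) : x ⬝ᵥ Ω *ᵥ y = y ⬝ᵥ Ω *ᵥ x := by
  rw [dotProduct_mulVec, ← mulVec_transpose, show Ωᵀ = Ω from hΩ, dotProduct_comm]

-- Cauchy-Schwarz for PSD matrices over ℝ
lemma psd_cs {Ω : Matrix (Fin d) (Fin d) ℝ} (h : Ω.PosSemidef) (x y : Fin d → ℝ) :
    (x ⬝ᵥ Ω *ᵥ y) ^ 2 ≤ (x ⬝ᵥ Ω *ᵥ x) * (y ⬝ᵥ Ω *ᵥ y) := by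
  have key : ∀ t : ℝ, 0 ≤ (y ⬝ᵥ Ω *ᵥ y) * (t * t) + (2 * (x ⬝ᵥ Ω *ᵥ y)) * t + (x ⬝ᵥ Ω *ᵥ x) := by
    intro t
    have h2 := h.dotProduct_mulVec_nonneg (x + t • y)
    simp only [star_trivial, mulVec_add, mulVec_smul, dotProduct_add, add_dotProduct,
      dotProduct_smul, smul_dotProduct, smul_eq_mul] at h2
    have hsym : x ⬝ᵥ Ω *ᵥ y = y ⬝ᵥ Ω *ᵥ x := herm_symm_dot h.1 x y
    rw [hsym] at h2 ⊢
    nlinarith [h2]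
  have := discrim_le_zero key
  rw [discrim] at this
  nlinarith [this]

lemma herm_of_psd_sub {lam : ℝ} {Ω : Matrix (Fin d) (Fin d) ℝ}
    (h : (Ω - lam • (1 : Matrix (Fin d) (Fin d) ℝ)).PosSemidef) : Ω.IsHermitian := by
  have h1 := h.1
  rw [IsHermitian, conjTranspose_sub, conjTranspose_smul, conjTranspose_one] at h1
  rw [star_trivial, sub_left_inj] at h1
  exact h1

lemma posdef_of_psd_sub {lam : ℝ} (hlam : 0 < lam) {Ω : Matrix (Fin d) (Fin d) ℝ}
    (h : (Ω - lam • (1 : Matrix (Fin d) (Fin d) ℝ)).PosSemidef) : Ω.PosDef := by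
  refine PosDef.of_dotProduct_mulVec_pos (herm_of_psd_sub h) fun x hx => ?_
  have h1 := quad_ge h x
  have hs : 0 < ∑ i, x i ^ 2 := by
    have : ∃ i, x i ≠ 0 := by
      by_contra hc
      push_neg at hc
      exact hx (funext hc)
    obtain ⟨i, hi⟩ := this
    have : 0 < x i ^ 2 := by positivity
    exact lt_of_lt_of_le this (Finset.single_le_sum (fun j _ => sq_nonneg (x j)) (Finset.mem_univ i))
  have : 0 < lam * ∑ i, x i ^ 2 := mul_pos hlam hs
  simpa [star_trivial] using lt_of_lt_of_le this h1

lemma det_bounds {lamlo lamhi : ℝ} (hlo : 0 < lamlo) {Ω : Matrix (Fin d) (Fin d) ℝ}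
    (h1 : (Ω - lamlo • (1 : Matrix (Fin d) (Fin d) ℝ)).PosSemidef)
    (h2 : (lamhi • (1 : Matrix (Fin d) (Fin d) ℝ) - Ω).PosSemidef) :
    lamlo ^ d ≤ Ω.det ∧ Ω.det ≤ lamhi ^ d := by
  have hΩ : Ω.IsHermitian := herm_of_psd_sub h1
  have hev : ∀ i, lamlo ≤ hΩ.eigenvalues i ∧ hΩ.eigenvalues i ≤ lamhi := by
    intro i
    set v : Fin d → ℝ := ⇑(hΩ.eigenvectorBasis i) with hv
    have hnorm : ∑ j, v j ^ 2 = 1 := by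
      have hn := hΩ.eigenvectorBasis.orthonormal.1 i
      rw [EuclideanSpace.norm_eq] at hn
      have h2 := congrArg (· ^ 2) hn
      simp only [one_pow] at h2
      rw [Real.sq_sqrt (Finset.sum_nonneg fun j _ => sq_nonneg _)] at h2
      simpa [Real.norm_eq_abs, sq_abs] using h2
    have heq : hΩ.eigenvalues i = v ⬝ᵥ Ω *ᵥ v := by
      have := hΩ.eigenvalues_eq i
      simpa [star_trivial] using this
    constructor
    · have := quad_ge h1 v
      rw [hnorm] at this
      rw [heq]; linarith
    · have := quad_le h2 v
      rw [hnorm] at this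
      rw [heq]; linarith
  have hdet : Ω.det = ∏ i, hΩ.eigenvalues i := by
    have := hΩ.det_eq_prod_eigenvalues
    push_cast at this
    simpa using this
  rw [hdet]
  constructor
  · calc lamlo ^ d = ∏ _i : Fin d, lamlo := by simp
      _ ≤ ∏ i, hΩ.eigenvalues i :=
        Finset.prod_le_prod (fun i _ => hlo.le) (fun i _ => (hev i).1)
  · calc (∏ i, hΩ.eigenvalues i) ≤ ∏ _i : Fin d, lamhi :=
        Finset.prod_le_prod (fun i _ => le_trans hlo.le (hev i).1) (fun i _ => (hev i).2)
      _ = lamhi ^ d := by simp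

lemma inv_quad_bounds {lamlo lamhi : ℝ} (hlo : 0 < lamlo) (hhi : 0 < lamhi)
    {Ω : Matrix (Fin d) (Fin d) ℝ}
    (h1 : (Ω - lamlo • (1 : Matrix (Fin d) (Fin d) ℝ)).PosSemidef)
    (h2 : (lamhi • (1 : Matrix (Fin d) (Fin d) ℝ) - Ω).PosSemidef) (y : Fin d → ℝ) :
    (∑ i, y i ^ 2) / lamhi ≤ y ⬝ᵥ Ω⁻¹ *ᵥ y ∧ y ⬝ᵥ Ω⁻¹ *ᵥ y ≤ (∑ i, y i ^ 2) / lamlo := by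
  have hPD : Ω.PosDef := posdef_of_psd_sub hlo h1
  have hΩ : Ω.IsHermitian := hPD.1
  set z : Fin d → ℝ := Ω⁻¹ *ᵥ y with hzdef
  have hz : Ω *ᵥ z = y := by
    rw [hzdef, mulVec_mulVec, mul_nonsing_inv _ (isUnit_iff_isUnit_det _ |>.1 hPD.isUnit),
      one_mulVec]
  have hq : y ⬝ᵥ Ω⁻¹ *ᵥ y = z ⬝ᵥ Ω *ᵥ z := by
    conv_rhs => rw [hz]
    exact dotProduct_comm y z
  have hzlo : lamlo * ∑ i, z i ^ 2 ≤ z ⬝ᵥ Ω *ᵥ z := quad_ge h1 z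
  have hzhi : z ⬝ᵥ Ω *ᵥ z ≤ lamhi * ∑ i, z i ^ 2 := quad_le h2 z
  have hznn : (0:ℝ) ≤ ∑ i, z i ^ 2 := Finset.sum_nonneg fun i _ => sq_nonneg _
  have hynn : (0:ℝ) ≤ ∑ i, y i ^ 2 := Finset.sum_nonneg fun i _ => sq_nonneg _
  have hqnn : (0:ℝ) ≤ z ⬝ᵥ Ω *ᵥ z := le_trans (mul_nonneg hlo.le hznn) hzlo
  constructor
  · -- lower bound
    have hyy : (∑ i, y i ^ 2) = z ⬝ᵥ Ω *ᵥ y := by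
      rw [← herm_symm_dot hΩ y z, ← hz, dotProduct_comm]
      simp [dotProduct, pow_two]
    have hcs := psd_cs hPD.posSemidef z y
    have hyhi : y ⬝ᵥ Ω *ᵥ y ≤ lamhi * ∑ i, y i ^ 2 := quad_le h2 y
    rw [hq]
    rcases eq_or_lt_of_le hynn with hy0 | hy0
    · rw [← hy0]
      simp only [zero_div]
      exact hqnn
    · rw [div_le_iff₀ hhi]
      have hmul := mul_le_mul_of_nonneg_left hyhi hqnn
      nlinarith [hcs, hyy, hmul, hy0]
  · -- upper bound
    have hcs : (y ⬝ᵥ z) ^ 2 ≤ (∑ i, y i ^ 2) * ∑ i, z i ^ 2 := by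
      have := Finset.sum_mul_sq_le_sq_mul_sq Finset.univ y z
      simpa [dotProduct] using this
    rw [hq] at hcs ⊢
    rcases eq_or_lt_of_le hqnn with hq0 | hq0
    · rw [← hq0]
      positivity
    · rw [le_div_iff₀ hlo]
      nlinarith [hcs, hzlo, hq0, hynn]

end LinAlg

section GaussBounds
variable {d : ℕ} {lamlo lamhi : ℝ}

lemma gauss_bounds (hlo : 0 < lamlo) (hhi : 0 < lamhi)
    {Ω : Matrix (Fin d) (Fin d) ℝ}
    (h1 : (Ω - lamlo • (1 : Matrix (Fin d) (Fin d) ℝ)).PosSemidef)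
    (h2 : (lamhi • (1 : Matrix (Fin d) (Fin d) ℝ) - Ω).PosSemidef)
    (μ x : Fin d → ℝ) :
    (Real.sqrt ((2 * Real.pi) ^ d * lamhi ^ d))⁻¹ *
        Real.exp (-(1 / 2) * ((∑ i, (x i - μ i) ^ 2) / lamlo)) ≤ gaussDensity μ Ω x ∧
      gaussDensity μ Ω x ≤ (Real.sqrt ((2 * Real.pi) ^ d * lamlo ^ d))⁻¹ *
        Real.exp (-(1 / 2) * ((∑ i, (x i - μ i) ^ 2) / lamhi)) := by
  have hπ : (0:ℝ) < (2 * Real.pi) ^ d := by positivity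
  obtain ⟨hdl, hdh⟩ := det_bounds hlo h1 h2
  have hdetpos : 0 < Ω.det := lt_of_lt_of_le (by positivity) hdl
  have hquad := inv_quad_bounds hlo hhi h1 h2 (x - μ)
  have hsub : ∀ i, (x - μ) i = x i - μ i := fun i => rfl
  have hsum : (∑ i, ((x - μ) i) ^ 2) = ∑ i, (x i - μ i) ^ 2 := by
    simp [hsub]
  rw [hsum] at hquad
  have hcard : Fintype.card (Fin d) = d := Fintype.card_fin d
  unfold gaussDensity
  rw [hcard]
  have hcoef_lo : (Real.sqrt ((2 * Real.pi) ^ d * lamhi ^ d))⁻¹ ≤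
      (Real.sqrt ((2 * Real.pi) ^ d * Ω.det))⁻¹ := by
    apply inv_anti₀
    · apply Real.sqrt_pos.2; positivity
    · exact Real.sqrt_le_sqrt (by nlinarith [hdh, hπ])
  have hcoef_hi : (Real.sqrt ((2 * Real.pi) ^ d * Ω.det))⁻¹ ≤
      (Real.sqrt ((2 * Real.pi) ^ d * lamlo ^ d))⁻¹ := by
    apply inv_anti₀
    · apply Real.sqrt_pos.2; positivity
    · exact Real.sqrt_le_sqrt (by nlinarith [hdl, hπ])
  have hexp_lo : Real.exp (-(1 / 2) * ((∑ i, (x i - μ i) ^ 2) / lamlo)) ≤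
      Real.exp (-(1 / 2) * ((x - μ) ⬝ᵥ Ω⁻¹ *ᵥ (x - μ))) := by
    apply Real.exp_le_exp.2
    nlinarith [hquad.2]
  have hexp_hi : Real.exp (-(1 / 2) * ((x - μ) ⬝ᵥ Ω⁻¹ *ᵥ (x - μ))) ≤
      Real.exp (-(1 / 2) * ((∑ i, (x i - μ i) ^ 2) / lamhi)) := by
    apply Real.exp_le_exp.2
    nlinarith [hquad.1]
  constructor
  · exact mul_le_mul hcoef_lo hexp_lo (Real.exp_pos _).le (by positivity)
  · exact mul_le_mul hcoef_hi hexp_hi (Real.exp_pos _).le (by positivity)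

end GaussBounds

section MixBound
variable {d : ℕ}

lemma mix_log_bound {K : ℕ}
    (q₀ : (Fin d → ℝ) → ℝ) (clo chi slo shi cμ lamlo lamhi : ℝ)
    (hclo : 0 < clo) (hchi : 0 < chi) (hslo : 0 < slo) (hshi : 0 < shi)
    (hcμ : 0 ≤ cμ) (hlamlo : 0 < lamlo) (hlamhi : 0 < lamhi)
    (htail : ∀ x : Fin d → ℝ,
      clo * Real.exp (-(∑ i, x i ^ 2) / (2 * slo ^ 2)) ≤ q₀ x ∧
      q₀ x ≤ chi * Real.exp (-(∑ i, x i ^ 2) / (2 * shi ^ 2)))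
    (w : Fin K → ℝ) (μv : Fin K → Fin d → ℝ) (Ω : Fin K → Matrix (Fin d) (Fin d) ℝ)
    (hw : ∀ k, 0 ≤ w k) (hw1 : ∑ k, w k = 1)
    (hμ : ∀ k, (∑ i, μv k i ^ 2) ≤ cμ ^ 2)
    (hΩ : ∀ k, (Ω k - lamlo • (1 : Matrix (Fin d) (Fin d) ℝ)).PosSemidef ∧
      (lamhi • (1 : Matrix (Fin d) (Fin d) ℝ) - Ω k).PosSemidef)
    (x : Fin d → ℝ) :
    |Real.log ((∑ k, w k * gaussDensity (μv k) (Ω k) x) / q₀ x)| ≤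
      (|Real.log ((Real.sqrt ((2 * Real.pi) ^ d * lamlo ^ d))⁻¹) - Real.log clo| +
        |Real.log ((Real.sqrt ((2 * Real.pi) ^ d * lamhi ^ d))⁻¹) - Real.log chi - cμ ^ 2 / lamlo|)
      + (1 / (2 * slo ^ 2) + 1 / lamlo) * ∑ i, x i ^ 2 := by
  set s : ℝ := ∑ i, x i ^ 2 with hsdef
  have hs : 0 ≤ s := Finset.sum_nonneg fun i _ => sq_nonneg _
  set C2 : ℝ := (Real.sqrt ((2 * Real.pi) ^ d * lamlo ^ d))⁻¹ with hC2
  set C1 : ℝ := (Real.sqrt ((2 * Real.pi) ^ d * lamhi ^ d))⁻¹ with hC1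
  have hC2pos : 0 < C2 := by rw [hC2]; positivity
  have hC1pos : 0 < C1 := by rw [hC1]; positivity
  set L : ℝ := C1 * Real.exp (-(s + cμ ^ 2) / lamlo) with hL
  have hLpos : 0 < L := by rw [hL]; positivity
  -- each gaussian is bounded above by C2 and below by L
  have hg : ∀ k, L ≤ gaussDensity (μv k) (Ω k) x ∧ gaussDensity (μv k) (Ω k) x ≤ C2 := by
    intro k
    obtain ⟨hlo2, hhi2⟩ := gauss_bounds hlamlo hlamhi (hΩ k).1 (hΩ k).2 (μv k) x
    have hr : 0 ≤ ∑ i, (x i - μv k i) ^ 2 := Finset.sum_nonneg fun i _ => sq_nonneg _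
    have hrle : (∑ i, (x i - μv k i) ^ 2) ≤ 2 * s + 2 * cμ ^ 2 := by
      have h1 : (∑ i, (x i - μv k i) ^ 2) ≤ ∑ i, (2 * x i ^ 2 + 2 * μv k i ^ 2) :=
        Finset.sum_le_sum fun i _ => by nlinarith [sq_nonneg (x i + μv k i)]
      rw [Finset.sum_add_distrib, ← Finset.mul_sum, ← Finset.mul_sum] at h1
      have := hμ k
      rw [hsdef]
      nlinarith
    constructor
    · refine le_trans ?_ hlo2
      rw [hL]
      apply mul_le_mul_of_nonneg_left _ hC1pos.le
      apply Real.exp_le_exp.2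
      rw [show -(1/2 : ℝ) * ((∑ i, (x i - μv k i) ^ 2) / lamlo)
          = (-(1/2) * ∑ i, (x i - μv k i) ^ 2) / lamlo by ring,
        div_le_div_iff₀ (by positivity) (by positivity)]
      nlinarith [mul_le_mul_of_nonneg_right hrle hlamlo.le]
    · refine le_trans hhi2 ?_
      rw [hC2]
      nth_rewrite 2 [show (Real.sqrt ((2 * Real.pi) ^ d * lamlo ^ d))⁻¹ =
        (Real.sqrt ((2 * Real.pi) ^ d * lamlo ^ d))⁻¹ * 1 from (mul_one _).symm]
      apply mul_le_mul_of_nonneg_left _ (by positivity)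
      rw [Real.exp_le_one_iff]
      have : (0:ℝ) ≤ (∑ i, (x i - μv k i) ^ 2) / lamhi := by positivity
      linarith
  -- mixture bounds
  set M : ℝ := ∑ k, w k * gaussDensity (μv k) (Ω k) x with hM
  have hMhi : M ≤ C2 := by
    rw [hM]
    calc (∑ k, w k * gaussDensity (μv k) (Ω k) x) ≤ ∑ k, w k * C2 :=
          Finset.sum_le_sum fun k _ => mul_le_mul_of_nonneg_left (hg k).2 (hw k)
      _ = C2 := by rw [← Finset.sum_mul, hw1, one_mul]
  have hMlo : L ≤ M := by
    rw [hM]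
    calc L = ∑ k, w k * L := by rw [← Finset.sum_mul, hw1, one_mul]
      _ ≤ ∑ k, w k * gaussDensity (μv k) (Ω k) x :=
          Finset.sum_le_sum fun k _ => mul_le_mul_of_nonneg_left (hg k).1 (hw k)
  have hMpos : 0 < M := lt_of_lt_of_le hLpos hMlo
  have hq0lo := (htail x).1
  have hq0hi := (htail x).2
  have hq0pos : 0 < q₀ x := lt_of_lt_of_le (by positivity) hq0lo
  rw [Real.log_div hMpos.ne' hq0pos.ne']
  -- log bounds
  have hlogM_hi : Real.log M ≤ Real.log C2 := Real.log_le_log hMpos hMhi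
  have hlogM_lo : Real.log C1 - (s + cμ ^ 2) / lamlo ≤ Real.log M := by
    have h := Real.log_le_log hLpos hMlo
    rw [hL, Real.log_mul hC1pos.ne' (Real.exp_ne_zero _), Real.log_exp, neg_div] at h
    linarith
  have hlogq_lo : Real.log clo - s / (2 * slo ^ 2) ≤ Real.log (q₀ x) := by
    have h := Real.log_le_log (by positivity) hq0lo
    rw [Real.log_mul hclo.ne' (Real.exp_ne_zero _), Real.log_exp, neg_div, ← hsdef] at h
    linarith
  have hlogq_hi : Real.log (q₀ x) ≤ Real.log chi - s / (2 * shi ^ 2) := by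
    have h := Real.log_le_log hq0pos hq0hi
    rw [Real.log_mul hchi.ne' (Real.exp_ne_zero _), Real.log_exp, neg_div, ← hsdef] at h
    linarith
  rw [abs_le]
  have hd1 : 0 ≤ s / (2 * shi ^ 2) := by positivity
  have he1 : s / (2 * slo ^ 2) = 1 / (2 * slo ^ 2) * s := by ring
  have he2 : (s + cμ ^ 2) / lamlo = 1 / lamlo * s + cμ ^ 2 / lamlo := by ring
  have habs1 := le_abs_self (Real.log C2 - Real.log clo)
  have habs2 := neg_abs_le (Real.log C1 - Real.log chi - cμ ^ 2 / lamlo)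
  have habs1' := abs_nonneg (Real.log C2 - Real.log clo)
  have habs2' := abs_nonneg (Real.log C1 - Real.log chi - cμ ^ 2 / lamlo)
  have hB1 : 0 ≤ 1 / lamlo * s := by positivity
  have hB2 : 0 ≤ 1 / (2 * slo ^ 2) * s := by positivity
  clear_value s C2 C1 L M
  clear hg hΩ htail hμ hw hw1 hq0lo hq0hi hM hL hC1 hC2 hsdef w μv Ω
  constructor
  · linarith
  · linarith

end MixBound

section ExistsC
open Filter Topology
open scoped ENNReal

lemma s_measurable (d : ℕ) : Measurable (fun x : Fin d → ℝ => ∑ i, x i ^ 2) := by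
  apply Finset.measurable_sum
  intro i _
  exact (measurable_pi_apply i).pow_const 2

lemma gauss_lintegral_finite (d : ℕ) {a : ℝ} (ha : 0 < a) :
    ∫⁻ x : Fin d → ℝ, ENNReal.ofReal (Real.exp (-a * ∑ i, x i ^ 2)) < ∞ := by
  have hint : Integrable (fun x : Fin d → ℝ => Real.exp (-a * ∑ i, x i ^ 2)) := by
    have h := Integrable.fintype_prod (f := fun (_ : Fin d) (t : ℝ) => Real.exp (-a * t ^ 2))
      (fun _ => integrable_exp_neg_mul_sq ha)
    convert h using 2 with x
    case e'_5 => rfl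
    rw [← Real.exp_sum, Finset.mul_sum]
    case e'_7 => rfl
  have hfin := hint.hasFiniteIntegral
  rw [HasFiniteIntegral] at hfin
  refine lt_of_le_of_lt (lintegral_mono fun x => ?_) hfin
  exact Real.ofReal_le_enorm _

lemma exists_c (d : ℕ) (q₀ : (Fin d → ℝ) → ℝ) (hq₀m : Measurable q₀)
    (chi shi : ℝ) (hchi : 0 < chi) (hshi : 0 < shi)
    (htailhi : ∀ x : Fin d → ℝ, q₀ x ≤ chi * Real.exp (-(∑ i, x i ^ 2) / (2 * shi ^ 2)))
    (hq₀nn : ∀ x, 0 ≤ q₀ x)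
    (hprob : IsProbabilityMeasure
      ((volume : Measure (Fin d → ℝ)).withDensity fun x => ENNReal.ofReal (q₀ x)))
    (A₀ B₀ : ℝ) (hA : 0 ≤ A₀) (hB : 0 < B₀) :
    ∃ c : ℝ, 0 < c ∧
      ∫⁻ x, ENNReal.ofReal (Real.exp ((A₀ + B₀ * ∑ i, x i ^ 2) / c))
        ∂((volume : Measure (Fin d → ℝ)).withDensity fun x => ENNReal.ofReal (q₀ x)) ≤ 2 := by
  set ν := (volume : Measure (Fin d → ℝ)).withDensity fun x => ENNReal.ofReal (q₀ x) with hν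
  set c₀ : ℝ := 4 * B₀ * shi ^ 2 with hc₀
  have hc₀pos : 0 < c₀ := by positivity
  have hρm : Measurable fun x : Fin d → ℝ => ENNReal.ofReal (q₀ x) :=
    ENNReal.measurable_ofReal.comp hq₀m
  have hFmeas : ∀ c : ℝ, Measurable
      (fun x : Fin d → ℝ => ENNReal.ofReal (Real.exp ((A₀ + B₀ * ∑ i, x i ^ 2) / c))) := by
    intro c
    exact ENNReal.measurable_ofReal.comp (Real.measurable_exp.comp
      (((s_measurable d).const_mul B₀).const_add A₀ |>.div_const c))
  -- finiteness of the dominating integral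
  have hGfin : ∫⁻ x, ENNReal.ofReal (Real.exp ((A₀ + B₀ * ∑ i, x i ^ 2) / c₀)) ∂ν ≠ ∞ := by
    rw [hν, lintegral_withDensity_eq_lintegral_mul _ hρm (hFmeas c₀)]
    have hbound : ∀ x : Fin d → ℝ,
        ENNReal.ofReal (q₀ x) * ENNReal.ofReal (Real.exp ((A₀ + B₀ * ∑ i, x i ^ 2) / c₀)) ≤
        ENNReal.ofReal (chi * Real.exp (A₀ / c₀)) *
          ENNReal.ofReal (Real.exp (-(1 / (4 * shi ^ 2)) * ∑ i, x i ^ 2)) := by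
      intro x
      rw [← ENNReal.ofReal_mul (hq₀nn x), ← ENNReal.ofReal_mul (by positivity)]
      apply ENNReal.ofReal_le_ofReal
      calc q₀ x * Real.exp ((A₀ + B₀ * ∑ i, x i ^ 2) / c₀)
          ≤ (chi * Real.exp (-(∑ i, x i ^ 2) / (2 * shi ^ 2))) *
            Real.exp ((A₀ + B₀ * ∑ i, x i ^ 2) / c₀) :=
            mul_le_mul_of_nonneg_right (htailhi x) (Real.exp_pos _).le
        _ = chi * Real.exp (A₀ / c₀) * Real.exp (-(1 / (4 * shi ^ 2)) * ∑ i, x i ^ 2) := by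
            rw [mul_assoc, mul_assoc, ← Real.exp_add, ← Real.exp_add]
            congr 2
            rw [hc₀]
            field_simp
            ring
    refine ne_of_lt (lt_of_le_of_lt (lintegral_mono hbound) ?_)
    rw [lintegral_const_mul' _ _ ENNReal.ofReal_ne_top]
    exact ENNReal.mul_lt_top ENNReal.ofReal_lt_top (gauss_lintegral_finite d (by positivity))
  -- dominated convergence
  have htend : Tendsto (fun n : ℕ =>
      ∫⁻ x, ENNReal.ofReal (Real.exp ((A₀ + B₀ * ∑ i, x i ^ 2) / (c₀ * (n + 1)))) ∂ν)
      atTop (𝓝 1) := by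
    have h1 : (1 : ℝ≥0∞) = ∫⁻ _, 1 ∂ν := by
      rw [lintegral_one, measure_univ]
    rw [h1]
    apply tendsto_lintegral_of_dominated_convergence
      (fun x => ENNReal.ofReal (Real.exp ((A₀ + B₀ * ∑ i, x i ^ 2) / c₀)))
    · intro n; exact hFmeas _
    · intro n
      apply Eventually.of_forall
      intro x
      apply ENNReal.ofReal_le_ofReal
      apply Real.exp_le_exp.2
      have hsnn : (0:ℝ) ≤ ∑ i, x i ^ 2 := Finset.sum_nonneg fun i _ => sq_nonneg (x i)
      have hnum : 0 ≤ A₀ + B₀ * ∑ i, x i ^ 2 := by positivity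
      have hle : c₀ ≤ c₀ * (n + 1) := by nlinarith [hc₀pos, Nat.cast_nonneg (α := ℝ) n]
      have hpos : (0:ℝ) < c₀ * (n + 1) := by positivity
      rcases eq_or_lt_of_le hnum with h0 | h0
      · rw [← h0]
        simp
      · rw [div_le_div_iff_of_pos_left h0 hpos hc₀pos]
        exact hle
    · exact hGfin
    · apply Eventually.of_forall
      intro x
      have hsnn : (0:ℝ) ≤ ∑ i, x i ^ 2 := Finset.sum_nonneg fun i _ => sq_nonneg (x i)
      have htop : Tendsto (fun n : ℕ => c₀ * (n + 1)) atTop atTop := by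
        apply Tendsto.const_mul_atTop hc₀pos
        exact tendsto_atTop_add_const_right _ 1 tendsto_natCast_atTop_atTop
      have hdiv : Tendsto (fun n : ℕ => (A₀ + B₀ * ∑ i, x i ^ 2) / (c₀ * (n + 1)))
          atTop (𝓝 0) := Tendsto.div_atTop tendsto_const_nhds htop
      have h2 := (ENNReal.continuous_ofReal.tendsto _).comp
        ((Real.continuous_exp.tendsto 0).comp hdiv)
      rw [Real.exp_zero, ENNReal.ofReal_one] at h2
      simpa [Function.comp_def] using h2
  have hev : ∀ᶠ n : ℕ in atTop,
      ∫⁻ x, ENNReal.ofReal (Real.exp ((A₀ + B₀ * ∑ i, x i ^ 2) / (c₀ * (n + 1)))) ∂ν ≤ 2 :=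
    htend.eventually_le_const (by norm_num)
  obtain ⟨n, hn⟩ := hev.exists
  exact ⟨c₀ * (n + 1), by positivity, hn⟩

end ExistsC


/-- Uniform Orlicz bound for log-density ratios of Gaussian mixtures relative to a
probability measure `Q₀` with Gaussian-like tails. -/
theorem stmt18 (d : ℕ) (hd : 0 < d)
    (q₀ : (Fin d → ℝ) → ℝ) (hq₀m : Measurable q₀)
    (clo chi slo shi cμ lamlo lamhi : ℝ)
    (hclo : 0 < clo) (hchi : 0 < chi) (hslo : 0 < slo) (hshi : 0 < shi)
    (hcμ : 0 ≤ cμ) (hlamlo : 0 < lamlo) (hlamhi : 0 < lamhi)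
    (htail : ∀ x : Fin d → ℝ,
      clo * Real.exp (-(∑ i, x i ^ 2) / (2 * slo ^ 2)) ≤ q₀ x ∧
      q₀ x ≤ chi * Real.exp (-(∑ i, x i ^ 2) / (2 * shi ^ 2)))
    (hprob : IsProbabilityMeasure
      ((volume : Measure (Fin d → ℝ)).withDensity fun x => ENNReal.ofReal (q₀ x))) :
    ∃ B : ℝ, 0 < B ∧
      ∀ (K : ℕ), 0 < K →
      ∀ (w : Fin K → ℝ) (μv : Fin K → Fin d → ℝ)
        (Ω : Fin K → Matrix (Fin d) (Fin d) ℝ),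
        (∀ k, 0 ≤ w k) → (∑ k, w k = 1) →
        (∀ k, (∑ i, μv k i ^ 2) ≤ cμ ^ 2) →
        (∀ k, (Ω k - lamlo • (1 : Matrix (Fin d) (Fin d) ℝ)).PosSemidef ∧
          (lamhi • (1 : Matrix (Fin d) (Fin d) ℝ) - Ω k).PosSemidef) →
        (∃ c : ℝ, 0 < c ∧
          ∫⁻ x, ENNReal.ofReal (Real.exp
              (|Real.log ((∑ k, w k * gaussDensity (μv k) (Ω k) x) / q₀ x)| / c))
            ∂((volume : Measure (Fin d → ℝ)).withDensity fun x => ENNReal.ofReal (q₀ x))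
            ≤ 2) ∧
        luxE ((volume : Measure (Fin d → ℝ)).withDensity fun x => ENNReal.ofReal (q₀ x))
          (fun x => Real.log ((∑ k, w k * gaussDensity (μv k) (Ω k) x) / q₀ x)) ≤ B := by
  set A₀ : ℝ :=
    |Real.log ((Real.sqrt ((2 * Real.pi) ^ d * lamlo ^ d))⁻¹) - Real.log clo| +
      |Real.log ((Real.sqrt ((2 * Real.pi) ^ d * lamhi ^ d))⁻¹) - Real.log chi -
        cμ ^ 2 / lamlo| with hA₀
  set B₀ : ℝ := 1 / (2 * slo ^ 2) + 1 / lamlo with hB₀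
  have hA : 0 ≤ A₀ := by rw [hA₀]; positivity
  have hB : 0 < B₀ := by rw [hB₀]; positivity
  have hq₀nn : ∀ x, 0 ≤ q₀ x := fun x => le_trans (by positivity) (htail x).1
  obtain ⟨c, hcpos, hcint⟩ := exists_c d q₀ hq₀m chi shi hchi hshi
    (fun x => (htail x).2) hq₀nn hprob A₀ B₀ hA hB
  refine ⟨c, hcpos, ?_⟩
  intro K hK w μv Ω hw hw1 hμ hΩ
  have hkey : ∫⁻ x, ENNReal.ofReal (Real.exp
      (|Real.log ((∑ k, w k * gaussDensity (μv k) (Ω k) x) / q₀ x)| / c))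
      ∂((volume : Measure (Fin d → ℝ)).withDensity fun x => ENNReal.ofReal (q₀ x)) ≤ 2 := by
    refine le_trans (lintegral_mono fun x => ?_) hcint
    apply ENNReal.ofReal_le_ofReal
    apply Real.exp_le_exp.2
    rw [div_le_div_iff_of_pos_right hcpos]
    exact mix_log_bound q₀ clo chi slo shi cμ lamlo lamhi hclo hchi hslo hshi hcμ
      hlamlo hlamhi htail w μv Ω hw hw1 hμ hΩ x
  refine ⟨⟨c, hcpos, hkey⟩, ?_⟩
  apply csInf_le
  · exact ⟨0, fun y hy => hy.1.le⟩
  · exact ⟨hcpos, hkey⟩
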